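/- There exists a constant C such that for every n ≥ 1 and every finite set Q with |Q| = n, the number of ranked slices over Q is at most C · (n!)². (Consequently, any transition-based deterministic parity automaton all of whose states are ranked slices over Q, as produced by the Muller-Schupp or the unified determinization construction, has at most C · (n!)² states.) -/

import Mathlib

/-- A ranked slice over `Q`, in list form: a tuple `t = (S₁, …, Sₙ)` of pairwise
disjoint nonempty subsets of `Q`, together with the list of ranks `(α 1, …, α n)`;
`α` being a bijection of `{1,…,n}` is expressed by the rank list being a permutation
of `[1,…,n]`, and `α n = 1` by the last entry being `1`. -/
def RankedSlices (Q : Type*) : Set (List (Set Q) × List ℕ) :=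
  {p | (∀ T ∈ p.1, T.Nonempty) ∧ p.1.Pairwise Disjoint ∧
    p.2.Perm (List.range' 1 p.1.length) ∧
    (1 ≤ p.1.length → p.2.getLast? = some 1)}

namespace RSAux

/-- partial sums of a list of naturals -/
def ps : List ℕ → List ℕ
  | [] => []
  | a :: l => a :: (ps l).map (a + ·)

/-- successive differences -/
def ds (l : List ℕ) : List ℕ := l.zipWith (· - ·) (0 :: l)

lemma zipWith_sub_map (a : ℕ) : ∀ (p : List ℕ) (b : ℕ),
    (p.map (a + ·)).zipWith (· - ·) ((a + b) :: p.map (a + ·))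
      = p.zipWith (· - ·) (b :: p)
  | [], _ => rfl
  | x :: xs, b => by
      simp only [List.map_cons, List.zipWith_cons_cons, Nat.add_sub_add_left]
      rw [zipWith_sub_map a xs x]

lemma ds_ps : ∀ s : List ℕ, ds (ps s) = s
  | [] => rfl
  | a :: l => by
      have := zipWith_sub_map a (ps l) 0
      rw [Nat.add_zero] at this
      simp only [ds, ps, List.zipWith_cons_cons, Nat.sub_zero, this]
      exact congrArg (a :: ·) (ds_ps l)

lemma ps_mem : ∀ {s : List ℕ}, (∀ x ∈ s, 1 ≤ x) → ∀ y ∈ ps s, 1 ≤ y ∧ y ≤ s.sum := by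
  intro s
  induction s with
  | nil => intro _ y hy; simp [ps] at hy
  | cons a l ih =>
      intro h y hy
      rcases List.mem_cons.1 hy with h1 | h2
      · subst h1
        exact ⟨h _ (List.mem_cons_self ..), Nat.le_add_right _ _⟩
      · rcases List.mem_map.1 h2 with ⟨z, hz, rfl⟩
        have := ih (fun x hx => h x (List.mem_cons_of_mem _ hx)) z hz
        constructor
        · omega
        · simp only [List.sum_cons]; omega

lemma ps_sorted : ∀ {s : List ℕ}, (∀ x ∈ s, 1 ≤ x) → (ps s).Pairwise (· < ·) := by
  intro s
  induction s with
  | nil => intro _; simp [ps]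
  | cons a l ih =>
      intro h
      have hl : ∀ x ∈ l, 1 ≤ x := fun x hx => h x (List.mem_cons_of_mem _ hx)
      refine List.pairwise_cons.2 ⟨?_, ?_⟩
      · intro b hb
        rcases List.mem_map.1 hb with ⟨z, hz, rfl⟩
        have := (ps_mem hl z hz).1
        omega
      · exact List.Pairwise.map _ (fun x y hxy => by omega) (ih hl)

lemma ps_length : ∀ s : List ℕ, (ps s).length = s.length
  | [] => rfl
  | a :: l => by simp [ps, ps_length l]

lemma length_le_sum : ∀ {s : List ℕ}, (∀ x ∈ s, 1 ≤ x) → s.length ≤ s.sum := by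
  intro s
  induction s with
  | nil => simp
  | cons a l ih =>
      intro h
      have := ih (fun x hx => h x (List.mem_cons_of_mem _ hx))
      have := h a (List.mem_cons_self ..)
      simp only [List.length_cons, List.sum_cons]
      omega

lemma flatten_append_inj {α : Type*} : ∀ {L₁ L₂ : List (List α)} {r₁ r₂ : List α},
    L₁.flatten ++ r₁ = L₂.flatten ++ r₂ → L₁.map List.length = L₂.map List.length →
    L₁ = L₂
  | [], [], _, _, _, _ => rfl
  | [], _ :: _, _, _, _, hlen => by simp at hlen
  | _ :: _, [], _, _, _, hlen => by simp at hlen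
  | a :: L₁, b :: L₂, r₁, r₂, happ, hlen => by
      simp only [List.map_cons, List.cons.injEq] at hlen
      simp only [List.flatten_cons, List.append_assoc] at happ
      obtain ⟨h1, h2⟩ := List.append_inj happ hlen.1
      exact h1 ▸ congrArg (a :: ·) (flatten_append_inj h2 hlen.2)

variable {Q : Type*} [Fintype Q] [LinearOrder Q]

/-- canonical sorted list of a set -/
noncomputable def slist (S : Set Q) : List Q := (S.toFinite.toFinset).sort (· ≤ ·)

lemma mem_slist {S : Set Q} {x : Q} : x ∈ slist S ↔ x ∈ S := by
  simp [slist, Finset.mem_sort, Set.Finite.mem_toFinset]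

lemma slist_injective : Function.Injective (slist (Q := Q)) := by
  intro S T h
  ext x
  rw [← mem_slist, h, mem_slist]

lemma slist_nodup (S : Set Q) : (slist S).Nodup := Finset.sort_nodup _ _

/-- the encoding of a ranked slice -/
noncomputable def enc (p : List (Set Q) × List ℕ) : List Q × (List ℕ × List ℕ) :=
  ((p.1.map slist).flatten
      ++ (Finset.univ \ ((p.1.map slist).flatten).toFinset).sort (· ≤ ·),
    ((p.1.map slist).map List.length, p.2))

noncomputable def PF (Q : Type*) [Fintype Q] [LinearOrder Q] : Finset (List Q) :=
  ((Finset.univ : Finset Q).sort (· ≤ ·)).permutations.toFinset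

def SkF (n k : ℕ) : Finset (List ℕ) :=
  ((Finset.Icc 1 n).powersetCard k).image (fun F => ds (F.sort (· ≤ ·)))

def RkF (k : ℕ) : Finset (List ℕ) := (List.range' 1 k).permutations.toFinset

def YF (n : ℕ) : Finset (List ℕ × List ℕ) :=
  (Finset.range (n + 1)).biUnion (fun k => SkF n k ×ˢ RkF k)

lemma card_PF : (PF Q).card ≤ Nat.factorial (Fintype.card Q) := by
  refine (List.toFinset_card_le _).trans ?_
  rw [List.length_permutations, Finset.length_sort, Finset.card_univ]

lemma card_SkF (n k : ℕ) : (SkF n k).card ≤ n.choose k := by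
  refine Finset.card_image_le.trans ?_
  rw [Finset.card_powersetCard, Nat.card_Icc]
  simp

lemma card_RkF (k : ℕ) : (RkF k).card ≤ Nat.factorial k := by
  refine (List.toFinset_card_le _).trans ?_
  rw [List.length_permutations, List.length_range']

lemma card_YF (n : ℕ) :
    (YF n).card ≤ ∑ k ∈ Finset.range (n + 1), n.descFactorial k := by
  refine (Finset.card_biUnion_le).trans (Finset.sum_le_sum fun k _ => ?_)
  rw [Finset.card_product, Nat.descFactorial_eq_factorial_mul_choose]
  calc (SkF n k).card * (RkF k).card ≤ n.choose k * Nat.factorial k :=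
        Nat.mul_le_mul (card_SkF n k) (card_RkF k)
    _ = Nat.factorial k * n.choose k := mul_comm _ _

lemma sum_descFactorial_le : ∀ n : ℕ, 1 ≤ n →
    (∑ k ∈ Finset.range (n + 1), n.descFactorial k) + 1 ≤ 3 * Nat.factorial n := by
  intro n hn
  induction n with
  | zero => omega
  | succ m ih =>
      rcases Nat.eq_or_lt_of_le hn with h | h
      · simp [← h]; decide
      · have hm : 1 ≤ m := by omega
        have step : (∑ k ∈ Finset.range (m + 2), (m+1).descFactorial k)
            = (m + 1) * (∑ k ∈ Finset.range (m + 1), m.descFactorial k) + 1 := by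
          rw [Finset.sum_range_succ']
          simp only [Nat.succ_descFactorial_succ, Nat.descFactorial_zero]
          rw [← Finset.mul_sum]
        have := ih hm
        have h2 : 2 ≤ m + 1 := by omega
        calc (∑ k ∈ Finset.range (m + 2), (m+1).descFactorial k) + 1
            = (m + 1) * (∑ k ∈ Finset.range (m + 1), m.descFactorial k) + 2 := by omega
          _ ≤ (m + 1) * ((∑ k ∈ Finset.range (m + 1), m.descFactorial k) + 1) := by nlinarith
          _ ≤ (m + 1) * (3 * Nat.factorial m) := Nat.mul_le_mul_left _ (ih hm)
          _ = 3 * Nat.factorial (m + 1) := by rw [Nat.factorial_succ]; ring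

lemma flat_nodup {p : List (Set Q) × List ℕ} (hdisj : p.1.Pairwise Disjoint) :
    ((p.1.map slist).flatten).Nodup := by
  rw [List.nodup_flatten]
  constructor
  · intro l hl
    rcases List.mem_map.1 hl with ⟨S, _, rfl⟩
    exact slist_nodup S
  · refine List.Pairwise.map _ (fun S T hST => ?_) hdisj
    rw [List.disjoint_left]
    intro a haS haT
    exact Set.disjoint_left.1 hST (mem_slist.1 haS) (mem_slist.1 haT)

lemma sizes_pos {p : List (Set Q) × List ℕ} (hne : ∀ T ∈ p.1, T.Nonempty) :
    ∀ x ∈ (p.1.map slist).map List.length, 1 ≤ x := by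
  intro x hx
  rcases List.mem_map.1 hx with ⟨l, hl, rfl⟩
  rcases List.mem_map.1 hl with ⟨S, hS, rfl⟩
  obtain ⟨y, hy⟩ := hne S hS
  exact List.length_pos_of_mem (mem_slist.2 hy)

lemma enc_mem {p : List (Set Q) × List ℕ} (hp : p ∈ RankedSlices Q) :
    enc p ∈ PF Q ×ˢ YF (Fintype.card Q) := by
  obtain ⟨hne, hdisj, hperm, -⟩ := hp
  have hpos := sizes_pos (p := p) hne
  have hfl : ((p.1.map slist).flatten).Nodup := flat_nodup (p := p) hdisj
  have hsum : ((p.1.map slist).map List.length).sum = ((p.1.map slist).flatten).length :=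
    List.length_flatten.symm
  have hsumn : ((p.1.map slist).map List.length).sum ≤ Fintype.card Q := by
    rw [hsum]; exact hfl.length_le_card
  rw [Finset.mem_product]
  refine ⟨?_, ?_⟩
  · -- first component in PF
    simp only [enc]
    have hwnodup : (((p.1.map slist).flatten)
        ++ (Finset.univ \ ((p.1.map slist).flatten).toFinset).sort (· ≤ ·)).Nodup := by
      refine hfl.append (Finset.sort_nodup _ _) ?_
      intro x hx hxr
      have := Finset.mem_sort (α := Q) (· ≤ ·) |>.1 hxr
      rw [Finset.mem_sdiff] at this
      exact this.2 (List.mem_toFinset.2 hx)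
    have hsub : ((Finset.univ : Finset Q).sort (· ≤ ·)) ⊆
        ((p.1.map slist).flatten)
          ++ (Finset.univ \ ((p.1.map slist).flatten).toFinset).sort (· ≤ ·) := by
      intro q _
      by_cases hq : q ∈ (p.1.map slist).flatten
      · exact List.mem_append_left _ hq
      · refine List.mem_append_right _ ?_
        rw [Finset.mem_sort, Finset.mem_sdiff]
        exact ⟨Finset.mem_univ q, fun h => hq (List.mem_toFinset.1 h)⟩
    have hperm2 : (((p.1.map slist).flatten)
          ++ (Finset.univ \ ((p.1.map slist).flatten).toFinset).sort (· ≤ ·))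
        |>.Perm ((Finset.univ : Finset Q).sort (· ≤ ·)) :=
      (List.subperm_of_subset hwnodup
        (fun x _ => Finset.mem_sort (α := Q) (· ≤ ·) |>.2 (Finset.mem_univ x))).antisymm
        (List.subperm_of_subset (Finset.sort_nodup _ _) hsub)
    exact List.mem_toFinset.2 (List.mem_permutations.2 hperm2)
  · -- second component in YF
    simp only [enc]
    refine Finset.mem_biUnion.2 ⟨((p.1.map slist).map List.length).length, ?_,
      Finset.mem_product.2 ⟨?_, ?_⟩⟩
    · rw [Finset.mem_range]
      have := length_le_sum hpos
      omega
    · -- sizes ∈ SkF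
      refine Finset.mem_image.2 ⟨(ps ((p.1.map slist).map List.length)).toFinset, ?_, ?_⟩
      · rw [Finset.mem_powersetCard]
        constructor
        · intro y hy
          have := ps_mem hpos y (List.mem_toFinset.1 hy)
          rw [Finset.mem_Icc]
          omega
        · rw [List.toFinset_card_of_nodup ((ps_sorted hpos).nodup), ps_length]
      · rw [(List.toFinset_sort _ ((ps_sorted hpos).nodup)).2 ((ps_sorted hpos).imp le_of_lt),
          ds_ps]
    · -- ranks ∈ RkF
      refine List.mem_toFinset.2 (List.mem_permutations.2 ?_)
      have h : ((p.1.map slist).map List.length).length = p.1.length := by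
        simp
      rw [h]
      exact hperm

lemma enc_injOn : Set.InjOn (enc (Q := Q)) (RankedSlices Q) := by
  intro p _ q _ h
  have h2 : p.2 = q.2 := congrArg (fun x => x.2.2) h
  have hlen : (p.1.map slist).map List.length = (q.1.map slist).map List.length :=
    congrArg (fun x => x.2.1) h
  have happ := congrArg Prod.fst h
  simp only [enc] at happ
  have h1 : p.1.map slist = q.1.map slist := flatten_append_inj happ hlen
  exact Prod.ext (List.map_injective_iff.2 slist_injective h1) h2

end RSAux

/-- There is a constant `C` such that for every `n ≥ 1` and every
finite set `Q` with `|Q| = n`, the number of ranked slices over `Q` is at most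
`C · (n!)²`. -/
theorem rankedSlices_card_le : ∃ C : ℕ, ∀ n : ℕ, 1 ≤ n →
    ∀ (Q : Type) [Fintype Q], Fintype.card Q = n →
      (RankedSlices Q).ncard ≤ C * n.factorial ^ 2 := by
  refine ⟨3, fun n hn Q _ hQ => ?_⟩
  letI : LinearOrder Q := LinearOrder.lift' (Fintype.equivFin Q) (Fintype.equivFin Q).injective
  subst hQ
  have h1 : (RankedSlices Q).ncard ≤
      ((RSAux.PF Q ×ˢ RSAux.YF (Fintype.card Q) : Finset _) : Set _).ncard :=
    Set.ncard_le_ncard_of_injOn RSAux.enc (fun p hp => RSAux.enc_mem hp) RSAux.enc_injOn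
      (Finset.finite_toSet _)
  rw [Set.ncard_coe_finset, Finset.card_product] at h1
  have h2 := RSAux.card_PF (Q := Q)
  have h3 : (RSAux.YF (Fintype.card Q)).card ≤ 3 * Nat.factorial (Fintype.card Q) := by
    have := (RSAux.card_YF (Fintype.card Q))
    have := RSAux.sum_descFactorial_le (Fintype.card Q) hn
    omega
  calc (RankedSlices Q).ncard ≤ _ := h1
    _ ≤ Nat.factorial (Fintype.card Q) * (3 * Nat.factorial (Fintype.card Q)) :=
        Nat.mul_le_mul h2 h3
    _ = 3 * Nat.factorial (Fintype.card Q) ^ 2 := by ring
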